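/- Let Ω be a finite set and let φ : P(Ω) → ℤ₂ be a coevent such that the real-valued function A ↦ (1 if φ(A) = 1, else 0) is grade-2 additive over ℝ (i.e. φ corresponds to a pure q-measure). Then φ is quadratic: for all mutually disjoint A, B, C ⊆ Ω, φ(A ∪ B ∪ C) = φ(A ∪ B) ⊕ φ(A ∪ C) ⊕ φ(B ∪ C) ⊕ φ(A) ⊕ φ(B) ⊕ φ(C), where ⊕ denotes addition in ℤ₂. -/

import Mathlib

def Grade2Additive {Ω : Type*} [DecidableEq Ω] (μ : Finset Ω → ℝ) : Prop :=
  ∀ A B C : Finset Ω, Disjoint A B → Disjoint A C → Disjoint B C →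
    μ (A ∪ B ∪ C) = μ (A ∪ B) + μ (A ∪ C) + μ (B ∪ C) - μ A - μ B - μ C

theorem pure_coevent_is_quadratic {Ω : Type*} [Fintype Ω] [DecidableEq Ω]
    (φ : Finset Ω → ZMod 2) (h0 : φ ∅ = 0)
    (hpure : Grade2Additive (fun A => if φ A = 1 then (1 : ℝ) else 0)) :
    ∀ A B C : Finset Ω, Disjoint A B → Disjoint A C → Disjoint B C →
      φ (A ∪ B ∪ C) = φ (A ∪ B) + φ (A ∪ C) + φ (B ∪ C) + φ A + φ B + φ C := by
  intro A B C hAB hAC hBC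
  have key : ∀ X : Finset Ω, (if φ X = 1 then (1 : ℝ) else 0) = (((φ X).val : ℤ) : ℝ) := by
    intro X
    generalize φ X = x
    fin_cases x <;> simp [ZMod.val]
    · exact (by decide : ¬ (0 : ZMod 2) = 1)
    · exact (rfl : (1 : ZMod 2) = 1)
  have h := hpure A B C hAB hAC hBC
  simp only [key] at h
  have hZ : ((φ (A ∪ B ∪ C)).val : ℤ) = ((φ (A ∪ B)).val : ℤ) + ((φ (A ∪ C)).val : ℤ)
      + ((φ (B ∪ C)).val : ℤ) - ((φ A).val : ℤ) - ((φ B).val : ℤ) - ((φ C).val : ℤ) := by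
    exact_mod_cast h
  have hmap := congrArg (Int.cast : ℤ → ZMod 2) hZ
  push_cast at hmap
  simp only [ZMod.natCast_val, ZMod.cast_id] at hmap
  rw [hmap]
  ring_nf
  rw [sub_eq_add_neg, sub_eq_add_neg, sub_eq_add_neg] at *
  simp [CharTwo.neg_eq]
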